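/- Let g, Y*, θ be as in the averaging setup, let Ω = (0,1) × (0,g_1), and Ω^ε = {(x1,x2) : 0 < x1 < 1, 0 < x2 < g(x1/ε)}. Then the characteristic functions χ_{Ω^ε} converge weakly-* in L^∞(Ω) to the function (x1,x2) ↦ θ(x2), that is, ∫_Ω χ_{Ω^ε}(x1,x2) φ(x1,x2) dx1dx2 → ∫_Ω θ(x2) φ(x1,x2) dx1dx2 for every φ ∈ L^1(Ω). -/

import Mathlib

open MeasureTheory Filter Set Topology


lemma tendsto_of_approx {α : Type*} {l : Filter α} {f : α → ℝ} {a : ℝ}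
    (h : ∀ δ : ℝ, 0 < δ → ∃ (G : α → ℝ) (b : ℝ), Tendsto G l (𝓝 b) ∧ |b - a| ≤ δ ∧
      ∀ᶠ x in l, |f x - G x| ≤ δ) :
    Tendsto f l (𝓝 a) := by
  rw [Metric.tendsto_nhds]
  intro ε hε
  obtain ⟨G, b, hG, hb, hfG⟩ := h (ε/3) (by linarith)
  have h1 : ∀ᶠ x in l, |G x - b| < ε/3 := by
    have := Metric.tendsto_nhds.1 hG (ε/3) (by linarith)
    simpa [Real.dist_eq] using this
  filter_upwards [h1, hfG] with x hx1 hx2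
  rw [Real.dist_eq]
  have t1 : |f x - b| ≤ |f x - G x| + |G x - b| := abs_sub_le _ _ _
  have t2 : |f x - a| ≤ |f x - b| + |b - a| := abs_sub_le _ _ _
  linarith

lemma lemA {L : ℝ} (hL : 0 < L) (h : ℝ → ℝ) (hm : Measurable h) (C : ℝ)
    (hC : ∀ x, |h x| ≤ C) (hper : ∀ x, h (x + L) = h x)
    (a b : ℝ) (hab : a ≤ b) :
    Tendsto (fun ε : ℝ => ∫ t in a..b, h (t / ε)) (𝓝[>] (0:ℝ))
      (𝓝 ((b - a) * ((1/L) * ∫ s in (0:ℝ)..L, h s))) := by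
  have hC0 : 0 ≤ C := le_trans (abs_nonneg _) (hC 0)
  have hPer : Function.Periodic h L := hper
  have hint : ∀ t₁ t₂ : ℝ, IntervalIntegrable h volume t₁ t₂ := by
    intro t₁ t₂
    rw [intervalIntegrable_iff]
    exact Integrable.mono' (integrableOn_const measure_Ioc_lt_top.ne)
      hm.aestronglyMeasurable (Filter.Eventually.of_forall fun x => hC x)
  set I : ℝ := ∫ s in (0:ℝ)..L, h s with hI
  have hIabs : |I| ≤ C * L := by
    have := intervalIntegral.norm_integral_le_of_norm_le_const
      (f := h) (a := (0:ℝ)) (b := L) (C := C) (fun x _ => hC x)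
    simpa [abs_of_pos hL] using this
  set K : ℝ := |I| + C * L with hK
  have hK0 : 0 ≤ K := by positivity
  have key : ∀ ε : ℝ, 0 < ε →
      |(∫ t in a..b, h (t / ε)) - (b - a) * ((1/L) * I)| ≤ ε * K := by
    intro ε hε
    have hεne : ε ≠ 0 := ne_of_gt hε
    rw [intervalIntegral.integral_comp_div (f := h) hεne]
    set T₀ : ℝ := a / ε with hT₀
    set T₁ : ℝ := b / ε with hT₁
    have hT : T₀ ≤ T₁ := div_le_div_of_nonneg_right hab hε.le
    set n : ℤ := ⌊(T₁ - T₀) / L⌋ with hn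
    have hn0 : 0 ≤ (n : ℝ) := by
      have : (0:ℝ) ≤ (T₁ - T₀) / L := div_nonneg (by linarith) hL.le
      exact_mod_cast Int.floor_nonneg.2 this
    have hfl1 : (n : ℝ) * L ≤ T₁ - T₀ := by
      have := Int.floor_le ((T₁ - T₀) / L)
      calc (n:ℝ) * L ≤ ((T₁ - T₀)/L) * L := by nlinarith
        _ = T₁ - T₀ := by field_simp
    have hfl2 : T₁ - T₀ < ((n:ℝ) + 1) * L := by
      have := Int.lt_floor_add_one ((T₁ - T₀) / L)
      calc T₁ - T₀ = ((T₁ - T₀)/L) * L := by field_simp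
        _ < ((n:ℝ) + 1) * L := by push_cast; nlinarith
    have hba : ε * (T₁ - T₀) = b - a := by
      rw [hT₀, hT₁]; field_simp
    have hsplit : (∫ t in T₀..T₁, h t) =
        (∫ t in T₀..(T₀ + n • L), h t) + ∫ t in (T₀ + n • L)..T₁, h t :=
      (intervalIntegral.integral_add_adjacent_intervals (hint _ _) (hint _ _)).symm
    have hmain : (∫ t in T₀..(T₀ + n • L), h t) = (n : ℝ) * I := by
      rw [hPer.intervalIntegral_add_zsmul_eq n T₀ hint,
        hPer.intervalIntegral_add_eq T₀ 0]
      simp [hI]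
    set R : ℝ := ∫ t in (T₀ + n • L)..T₁, h t with hR
    have hrest : |R| ≤ C * L := by
      have h1 : |R| ≤ C * |T₁ - (T₀ + n • L)| := by
        have := intervalIntegral.norm_integral_le_of_norm_le_const
          (f := h) (a := T₀ + n • L) (b := T₁) (C := C) (fun x _ => hC x)
        simpa only [Real.norm_eq_abs] using this
      have h2 : |T₁ - (T₀ + n • L)| ≤ L := by
        rw [abs_le]
        constructor
        · simp only [zsmul_eq_mul]; nlinarith
        · simp only [zsmul_eq_mul]; nlinarith
      nlinarith [abs_nonneg R]
    have e1 : ε * ((n:ℝ) * L) ≤ b - a := by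
      calc ε * ((n:ℝ) * L) ≤ ε * (T₁ - T₀) := mul_le_mul_of_nonneg_left hfl1 hε.le
        _ = b - a := hba
    have e2 : b - a < ε * (((n:ℝ) + 1) * L) := by
      calc b - a = ε * (T₁ - T₀) := hba.symm
        _ < ε * (((n:ℝ)+1) * L) := mul_lt_mul_of_pos_left hfl2 hε
    have hεn : |ε * (n:ℝ) - (b - a) / L| ≤ ε := by
      have u1 : ε * (n:ℝ) ≤ (b-a)/L := by rw [le_div_iff₀ hL]; nlinarith
      have u2 : (b-a)/L < ε * (n:ℝ) + ε := by rw [div_lt_iff₀ hL]; nlinarith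
      rw [abs_le]; constructor <;> linarith
    calc |ε • (∫ t in T₀..T₁, h t) - (b - a) * ((1/L) * I)|
        = |(ε * (n:ℝ) - (b-a)/L) * I + ε * R| := by
          rw [hsplit, hmain, smul_eq_mul]; congr 1; ring
      _ ≤ |(ε * (n:ℝ) - (b-a)/L) * I| + |ε * R| := abs_add_le _ _
      _ ≤ ε * |I| + ε * (C * L) := by
          rw [abs_mul, abs_mul, abs_of_pos hε]
          have := abs_nonneg I
          nlinarith [hεn, hrest]
      _ = ε * K := by rw [hK]; ring
  refine tendsto_sub_nhds_zero_iff.1 ?_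
  refine squeeze_zero_norm' (a := fun ε : ℝ => ε * K) ?_ ?_
  · filter_upwards [self_mem_nhdsWithin] with ε (hε : ε ∈ Ioi (0:ℝ))
    simpa using key ε hε
  · have : Tendsto (fun ε : ℝ => ε * K) (𝓝 (0:ℝ)) (𝓝 (0 * K)) :=
      (continuous_id.mul continuous_const).tendsto 0
    simpa using this.mono_left nhdsWithin_le_nhds

lemma lemB {L : ℝ} (hL : 0 < L) (h : ℝ → ℝ) (hm : Measurable h) (C : ℝ)
    (hC : ∀ x, |h x| ≤ C) (hper : ∀ x, h (x + L) = h x)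
    (ψ : ℝ → ℝ) (hψ : Continuous ψ) :
    Tendsto (fun ε : ℝ => ∫ t in Ioo (0:ℝ) 1, h (t / ε) * ψ t) (𝓝[>] (0:ℝ))
      (𝓝 (((1/L) * ∫ s in (0:ℝ)..L, h s) * ∫ t in Ioo (0:ℝ) 1, ψ t)) := by
  have hC0 : 0 ≤ C := le_trans (abs_nonneg _) (hC 0)
  set hbar : ℝ := (1/L) * ∫ s in (0:ℝ)..L, h s with hhbar
  have hbarabs : |hbar| ≤ C := by
    have h1 : |∫ s in (0:ℝ)..L, h s| ≤ C * L := by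
      have := intervalIntegral.norm_integral_le_of_norm_le_const
        (f := h) (a := (0:ℝ)) (b := L) (C := C) (fun x _ => hC x)
      simpa [abs_of_pos hL] using this
    rw [hhbar, abs_mul, abs_of_pos (by positivity : (0:ℝ) < 1/L)]
    rw [div_mul_eq_mul_div, one_mul, div_le_iff₀ hL]
    linarith [h1]
  -- integrability helpers
  have hWmeas : ∀ ε : ℝ, Measurable fun t => h (t / ε) :=
    fun ε => hm.comp (measurable_id.div_const ε)
  have hWint : ∀ (ε t₁ t₂ : ℝ), IntervalIntegrable (fun t => h (t / ε)) volume t₁ t₂ := by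
    intro ε t₁ t₂
    rw [intervalIntegrable_iff]
    exact Integrable.mono' (integrableOn_const measure_Ioc_lt_top.ne)
      (hWmeas ε).aestronglyMeasurable (Filter.Eventually.of_forall fun x => hC _)
  have hWψint : ∀ (ε t₁ t₂ : ℝ),
      IntervalIntegrable (fun t => h (t / ε) * ψ t) volume t₁ t₂ :=
    fun ε t₁ t₂ => (hWint ε t₁ t₂).mul_continuousOn hψ.continuousOn
  -- Ioo ↔ interval integral
  have hIoo : ∀ (F : ℝ → ℝ), (∫ t in Ioo (0:ℝ) 1, F t) = ∫ t in (0:ℝ)..1, F t := by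
    intro F
    rw [intervalIntegral.integral_of_le (by norm_num : (0:ℝ) ≤ 1),
      integral_Ioc_eq_integral_Ioo]
  apply tendsto_of_approx
  intro δ hδ
  set δ' : ℝ := δ / (C + 1) with hδ'def
  have hδ' : 0 < δ' := by positivity
  have hCδ' : C * δ' ≤ δ := by
    have he : C * δ' = C * δ / (C+1) := by rw [hδ'def]; ring
    rw [he, div_le_iff₀ (by positivity : (0:ℝ) < C + 1)]
    nlinarith
  -- uniform continuity
  obtain ⟨η, hη0, hη⟩ := Metric.uniformContinuousOn_iff.1
    (isCompact_Icc.uniformContinuousOn_of_continuous (hψ.continuousOn :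
      ContinuousOn ψ (Icc (0:ℝ) 1))) δ' hδ'
  obtain ⟨N₀, hN₀⟩ := exists_nat_one_div_lt hη0
  set N : ℕ := N₀ + 1 with hNdef
  have hN0 : 0 < (N : ℝ) := by positivity
  have hNη : 1 / (N:ℝ) < η := by exact_mod_cast hN₀
  -- mesh points
  have hmesh : ∀ k : ℕ, k < N → ((k:ℝ)/N) ≤ (((k:ℝ)+1)/N) := by
    intro k _
    gcongr
    linarith
  have hptmem : ∀ k : ℕ, k < N → (k:ℝ)/N ∈ Icc (0:ℝ) 1 := by
    intro k hk
    constructor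
    · positivity
    · rw [div_le_one hN0]; exact_mod_cast hk.le
  have hclose : ∀ k : ℕ, k < N → ∀ t ∈ Ioc ((k:ℝ)/N) (((k:ℝ)+1)/N),
      |ψ t - ψ ((k:ℝ)/N)| ≤ δ' := by
    intro k hk t ht
    have htmem : t ∈ Icc (0:ℝ) 1 := by
      constructor
      · have := (hptmem k hk).1; linarith [ht.1]
      · have : ((k:ℝ)+1)/N ≤ 1 := by
          rw [div_le_one hN0]
          have : (k:ℝ) + 1 ≤ N := by exact_mod_cast hk
          linarith
        linarith [ht.2]
    have hdist : dist t ((k:ℝ)/N) < η := by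
      rw [Real.dist_eq, abs_of_nonneg (by linarith [ht.1] : (0:ℝ) ≤ t - (k:ℝ)/N)]
      have : t - (k:ℝ)/N ≤ 1/N := by
        have := ht.2
        have hd : ((k:ℝ)+1)/N - (k:ℝ)/N = 1/N := by field_simp; ring
        linarith
      linarith
    have := hη t htmem ((k:ℝ)/N) (hptmem k hk) hdist
    rw [Real.dist_eq] at this
    linarith
  -- sum splitting
  have hsum : ∀ (F : ℝ → ℝ), (∀ t₁ t₂, IntervalIntegrable F volume t₁ t₂) →
      (∫ t in (0:ℝ)..1, F t)
        = ∑ k ∈ Finset.range N, ∫ t in ((k:ℝ)/N)..(((k:ℝ)+1)/N), F t := by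
    intro F hF
    have key := intervalIntegral.sum_integral_adjacent_intervals
      (a := fun k : ℕ => (k:ℝ)/N) (n := N) (μ := volume) (fun k _ => hF _ _)
    have h0 : ((0:ℕ):ℝ)/(N:ℝ) = 0 := by simp
    have h1 : ((N:ℕ):ℝ)/(N:ℝ) = 1 := by field_simp
    calc ∫ t in (0:ℝ)..1, F t
        = ∫ x in (((0:ℕ):ℝ)/(N:ℝ))..(((N:ℕ):ℝ)/(N:ℝ)), F x := by rw [h0, h1]
      _ = ∑ k ∈ Finset.range N, ∫ x in ((k:ℝ)/N)..((((k+1:ℕ)):ℝ)/N), F x := key.symm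
      _ = ∑ k ∈ Finset.range N, ∫ t in ((k:ℝ)/N)..(((k:ℝ)+1)/N), F t := by
          apply Finset.sum_congr rfl; intro k _; congr 1; push_cast; ring
  -- the approximating family
  refine ⟨fun ε => ∑ k ∈ Finset.range N, ψ ((k:ℝ)/N) *
      ∫ t in ((k:ℝ)/N)..(((k:ℝ)+1)/N), h (t / ε),
    ∑ k ∈ Finset.range N, ψ ((k:ℝ)/N) * (((((k:ℝ)+1)/N) - (k:ℝ)/N) * hbar),
    ?_, ?_, ?_⟩
  · apply tendsto_finset_sum
    intro k hk
    exact (lemA hL h hm C hC hper _ _ (hmesh k (Finset.mem_range.1 hk))).const_mul _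
  · -- |b - a| ≤ δ
    rw [hIoo ψ, hsum ψ (fun t₁ t₂ => hψ.intervalIntegrable t₁ t₂), Finset.mul_sum,
      ← Finset.sum_sub_distrib]
    refine le_trans (Finset.abs_sum_le_sum_abs _ _) (le_trans ?_ hCδ')
    have hterm : ∀ k ∈ Finset.range N,
        |ψ ((k:ℝ)/N) * (((((k:ℝ)+1)/N) - (k:ℝ)/N) * hbar)
          - hbar * ∫ t in ((k:ℝ)/N)..(((k:ℝ)+1)/N), ψ t| ≤ C * δ' / N := by
      intro k hk
      have hk' := Finset.mem_range.1 hk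
      have hpiece : |(∫ t in ((k:ℝ)/N)..(((k:ℝ)+1)/N), ψ t)
          - ψ ((k:ℝ)/N) * (((((k:ℝ)+1)/N) - (k:ℝ)/N))| ≤ δ' * (1/N) := by
        have heq : (∫ t in ((k:ℝ)/N)..(((k:ℝ)+1)/N), ψ t)
            - ψ ((k:ℝ)/N) * (((((k:ℝ)+1)/N) - (k:ℝ)/N))
            = ∫ t in ((k:ℝ)/N)..(((k:ℝ)+1)/N), (ψ t - ψ ((k:ℝ)/N)) := by
          rw [intervalIntegral.integral_sub (hψ.intervalIntegrable _ _)
            intervalIntegrable_const, intervalIntegral.integral_const, smul_eq_mul]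
          ring
        rw [heq]
        have := intervalIntegral.norm_integral_le_of_norm_le_const
          (f := fun t => ψ t - ψ ((k:ℝ)/N)) (a := (k:ℝ)/N) (b := ((k:ℝ)+1)/N)
          (C := δ') ?_
        · have habs : |(((k:ℝ)+1)/N) - (k:ℝ)/N| = 1/N := by
            rw [show (((k:ℝ)+1)/N) - (k:ℝ)/N = 1/N by field_simp; ring]
            exact abs_of_pos (by positivity)
          simpa [Real.norm_eq_abs, habs] using this
        · intro x hx
          rw [Set.uIoc_of_le (hmesh k hk')] at hx
          simpa [Real.norm_eq_abs] using hclose k hk' x hx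
      have hΔ : (((k:ℝ)+1)/N) - (k:ℝ)/N = 1/N := by field_simp; ring
      calc |ψ ((k:ℝ)/N) * (((((k:ℝ)+1)/N) - (k:ℝ)/N) * hbar)
            - hbar * ∫ t in ((k:ℝ)/N)..(((k:ℝ)+1)/N), ψ t|
          = |hbar| * |ψ ((k:ℝ)/N) * (((((k:ℝ)+1)/N) - (k:ℝ)/N))
              - ∫ t in ((k:ℝ)/N)..(((k:ℝ)+1)/N), ψ t| := by
            rw [← abs_mul]; congr 1; ring
        _ ≤ C * (δ' * (1/N)) := by
            apply mul_le_mul hbarabs ?_ (abs_nonneg _) hC0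
            rw [abs_sub_comm]; exact hpiece
        _ = C * δ' / N := by ring
    refine le_trans (Finset.sum_le_sum hterm) ?_
    rw [Finset.sum_const, Finset.card_range, nsmul_eq_mul]
    exact le_of_eq (by field_simp)
  · -- ∀ᶠ ε, |f ε - G ε| ≤ δ
    apply Filter.Eventually.of_forall
    intro ε
    rw [hIoo, hsum _ (fun t₁ t₂ => hWψint ε t₁ t₂), ← Finset.sum_sub_distrib]
    refine le_trans (Finset.abs_sum_le_sum_abs _ _) (le_trans ?_ hCδ')
    have hterm : ∀ k ∈ Finset.range N,
        |(∫ t in ((k:ℝ)/N)..(((k:ℝ)+1)/N), h (t/ε) * ψ t)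
          - ψ ((k:ℝ)/N) * ∫ t in ((k:ℝ)/N)..(((k:ℝ)+1)/N), h (t/ε)| ≤ C * δ' / N := by
      intro k hk
      have hk' := Finset.mem_range.1 hk
      have heq : (∫ t in ((k:ℝ)/N)..(((k:ℝ)+1)/N), h (t/ε) * ψ t)
          - ψ ((k:ℝ)/N) * ∫ t in ((k:ℝ)/N)..(((k:ℝ)+1)/N), h (t/ε)
          = ∫ t in ((k:ℝ)/N)..(((k:ℝ)+1)/N), h (t/ε) * (ψ t - ψ ((k:ℝ)/N)) := by
        rw [← intervalIntegral.integral_const_mul,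
          ← intervalIntegral.integral_sub (hWψint ε _ _)
            ((hWint ε _ _).const_mul _)]
        congr 1; ext t; ring
      rw [heq]
      have := intervalIntegral.norm_integral_le_of_norm_le_const
        (f := fun t => h (t/ε) * (ψ t - ψ ((k:ℝ)/N))) (a := (k:ℝ)/N)
        (b := ((k:ℝ)+1)/N) (C := C * δ') ?_
      · have habs : |(((k:ℝ)+1)/N) - (k:ℝ)/N| = 1/N := by
          rw [show (((k:ℝ)+1)/N) - (k:ℝ)/N = 1/N by field_simp; ring]
          exact abs_of_pos (by positivity)
        rw [Real.norm_eq_abs] at this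
        calc |∫ t in ((k:ℝ)/N)..(((k:ℝ)+1)/N), h (t/ε) * (ψ t - ψ ((k:ℝ)/N))|
            ≤ C * δ' * |(((k:ℝ)+1)/N) - (k:ℝ)/N| := this
          _ = C * δ' / N := by rw [habs]; ring
      · intro x hx
        rw [Set.uIoc_of_le (hmesh k hk')] at hx
        rw [Real.norm_eq_abs, abs_mul]
        have h1 := hC (x/ε)
        have h2 := hclose k hk' x hx
        have := abs_nonneg (h (x/ε))
        have := abs_nonneg (ψ x - ψ ((k:ℝ)/N))
        nlinarith
    refine le_trans (Finset.sum_le_sum hterm) ?_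
    rw [Finset.sum_const, Finset.card_range, nsmul_eq_mul]
    exact le_of_eq (by field_simp)

section Theta

variable {L g₁ : ℝ} (hL : 0 < L) (g : ℝ → ℝ)

/-- θ as in the statement. -/
noncomputable def theta (L : ℝ) (g : ℝ → ℝ) (y : ℝ) : ℝ :=
  (1 / L) * ∫ s in Ioo (0:ℝ) L, if y < g s then (1:ℝ) else 0

lemma indicator_meas (hgc : Continuous g) (y : ℝ) :
    Measurable (fun s : ℝ => if y < g s then (1:ℝ) else 0) :=
  Measurable.ite (isOpen_lt continuous_const hgc).measurableSet
    measurable_const measurable_const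

lemma indicator_int (hgc : Continuous g) (y a b : ℝ) :
    IntegrableOn (fun s : ℝ => if y < g s then (1:ℝ) else 0) (Ioo a b) := by
  refine Integrable.mono' (g := fun _ => (1:ℝ))
    (integrableOn_const measure_Ioo_lt_top.ne)
    (indicator_meas g hgc y).aestronglyMeasurable ?_
  refine Filter.Eventually.of_forall fun s => ?_
  by_cases h : y < g s <;> simp [h]

lemma theta_antitone (hL : 0 < L) (hgc : Continuous g) : Antitone (theta L g) := by
  intro y y' hyy'
  unfold theta
  apply mul_le_mul_of_nonneg_left _ (by positivity)
  apply integral_mono (indicator_int g hgc y' 0 L) (indicator_int g hgc y 0 L)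
  intro s
  by_cases h : y' < g s
  · simp only [h, if_pos (lt_of_le_of_lt hyy' h)]; exact le_refl _
  · by_cases h2 : y < g s <;> simp [h, h2]

lemma theta_meas (hL : 0 < L) (hgc : Continuous g) : Measurable (theta L g) :=
  (theta_antitone g hL hgc).measurable

lemma theta_nonneg (hL : 0 < L) (y : ℝ) : 0 ≤ theta L g y := by
  unfold theta
  apply mul_nonneg (by positivity)
  apply integral_nonneg
  intro s
  by_cases h : y < g s <;> simp [h]

lemma theta_le_one (hL : 0 < L) (hgc : Continuous g) (y : ℝ) : theta L g y ≤ 1 := by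
  unfold theta
  have h1 : (∫ s in Ioo (0:ℝ) L, if y < g s then (1:ℝ) else 0) ≤ L := by
    have h2 : (∫ _ in Ioo (0:ℝ) L, (1:ℝ)) = L := by
      simp [Real.volume_Ioo, ENNReal.toReal_ofReal hL.le, hL.le]
    calc (∫ s in Ioo (0:ℝ) L, if y < g s then (1:ℝ) else 0)
        ≤ ∫ _ in Ioo (0:ℝ) L, (1:ℝ) := by
          apply integral_mono (indicator_int g hgc y 0 L)
            (integrableOn_const measure_Ioo_lt_top.ne)
          intro s
          by_cases h : y < g s <;> simp [h]
      _ = L := h2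
  have h3 := mul_le_mul_of_nonneg_left h1 (le_of_lt (by positivity : (0:ℝ) < 1/L))
  calc (1/L) * (∫ s in Ioo (0:ℝ) L, if y < g s then (1:ℝ) else 0)
      ≤ (1/L) * L := h3
    _ = 1 := by field_simp

lemma theta_abs_le (hL : 0 < L) (hgc : Continuous g) (y : ℝ) : |theta L g y| ≤ 1 := by
  rw [abs_of_nonneg (theta_nonneg g hL y)]; exact theta_le_one g hL hgc y

end Theta

section Fub

lemma chi_meas (g : ℝ → ℝ) (hgc : Continuous g) (ε : ℝ) :
    Measurable (fun x : ℝ × ℝ => if x.2 < g (x.1 / ε) then (1:ℝ) else 0) :=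
  Measurable.ite (isOpen_lt continuous_snd (hgc.comp (continuous_fst.div_const ε))).measurableSet
    measurable_const measurable_const

lemma fub {g₁ : ℝ} (F : ℝ × ℝ → ℝ)
    (hF : IntegrableOn F (Ioo (0:ℝ) 1 ×ˢ Ioo (0:ℝ) g₁)) :
    ∫ x in Ioo (0:ℝ) 1 ×ˢ Ioo (0:ℝ) g₁, F x
      = ∫ y in Ioo (0:ℝ) g₁, ∫ t in Ioo (0:ℝ) 1, F (t, y) := by
  have hres : (volume : Measure (ℝ × ℝ)).restrict (Ioo (0:ℝ) 1 ×ˢ Ioo (0:ℝ) g₁)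
      = ((volume : Measure ℝ).restrict (Ioo 0 1)).prod
          ((volume : Measure ℝ).restrict (Ioo 0 g₁)) := by
    rw [Measure.volume_eq_prod, Measure.prod_restrict]
  have hF' : Integrable F (((volume : Measure ℝ).restrict (Ioo 0 1)).prod
      ((volume : Measure ℝ).restrict (Ioo 0 g₁))) := by
    rw [← hres]; exact hF
  have h1 : (∫ x in Ioo (0:ℝ) 1 ×ˢ Ioo (0:ℝ) g₁, F x)
      = ∫ z, F z ∂(((volume : Measure ℝ).restrict (Ioo 0 1)).prod
          ((volume : Measure ℝ).restrict (Ioo 0 g₁))) := by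
    rw [← hres]
  rw [h1, integral_prod_symm F hF']

end Fub

lemma lemC {L g₁ : ℝ} (hL : 0 < L) (g : ℝ → ℝ) (hgc : Continuous g)
    (hper : ∀ x, g (x + L) = g x)
    (ψ : ℝ × ℝ → ℝ) (hψc : Continuous ψ) (M : ℝ) (hM : ∀ x, |ψ x| ≤ M) :
    Tendsto (fun ε : ℝ => ∫ x in Ioo (0:ℝ) 1 ×ˢ Ioo (0:ℝ) g₁,
        (if x.2 < g (x.1 / ε) then (1:ℝ) else 0) * ψ x) (𝓝[>] (0:ℝ))
      (𝓝 (∫ x in Ioo (0:ℝ) 1 ×ˢ Ioo (0:ℝ) g₁, theta L g x.2 * ψ x)) := by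
  have hM0 : 0 ≤ M := le_trans (abs_nonneg _) (hM 0)
  have hΩfin : volume (Ioo (0:ℝ) 1 ×ˢ Ioo (0:ℝ) g₁) < ⊤ := by
    rw [Measure.volume_eq_prod, Measure.prod_prod]
    exact ENNReal.mul_lt_top measure_Ioo_lt_top measure_Ioo_lt_top
  have hInt1 : ∀ ε : ℝ, IntegrableOn
      (fun x : ℝ × ℝ => (if x.2 < g (x.1 / ε) then (1:ℝ) else 0) * ψ x)
      (Ioo (0:ℝ) 1 ×ˢ Ioo (0:ℝ) g₁) := by
    intro ε
    refine Integrable.mono' (g := fun _ => M) (integrableOn_const hΩfin.ne)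
      ((chi_meas g hgc ε).mul hψc.measurable).aestronglyMeasurable ?_
    refine Filter.Eventually.of_forall fun x => ?_
    rw [Real.norm_eq_abs, abs_mul]
    by_cases h : x.2 < g (x.1 / ε) <;> simp [h, hM x, abs_nonneg, hM0]
  have hInt2 : IntegrableOn (fun x : ℝ × ℝ => theta L g x.2 * ψ x)
      (Ioo (0:ℝ) 1 ×ˢ Ioo (0:ℝ) g₁) := by
    refine Integrable.mono' (g := fun _ => M) (integrableOn_const hΩfin.ne)
      (((theta_meas g hL hgc).comp measurable_snd).mul hψc.measurable).aestronglyMeasurable ?_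
    refine Filter.Eventually.of_forall fun x => ?_
    rw [Real.norm_eq_abs, abs_mul]
    have := theta_abs_le g hL hgc x.2
    nlinarith [abs_nonneg (ψ x), hM x, abs_nonneg (theta L g x.2)]
  have eq1 : (fun ε : ℝ => ∫ x in Ioo (0:ℝ) 1 ×ˢ Ioo (0:ℝ) g₁,
      (if x.2 < g (x.1 / ε) then (1:ℝ) else 0) * ψ x)
      = fun ε : ℝ => ∫ y in Ioo (0:ℝ) g₁, ∫ t in Ioo (0:ℝ) 1,
          (if y < g (t / ε) then (1:ℝ) else 0) * ψ (t, y) :=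
    funext fun ε => fub _ (hInt1 ε)
  rw [eq1, fub _ hInt2]
  -- dominated convergence in y
  apply tendsto_integral_filter_of_dominated_convergence (bound := fun _ => M)
  · refine Filter.Eventually.of_forall fun ε => ?_
    have hsm : StronglyMeasurable (fun x : ℝ × ℝ =>
        (if x.2 < g (x.1 / ε) then (1:ℝ) else 0) * ψ x) :=
      ((chi_meas g hgc ε).mul hψc.measurable).stronglyMeasurable
    exact (hsm.integral_prod_left' (μ := (volume : Measure ℝ).restrict (Ioo 0 1))).aestronglyMeasurable
  · refine Filter.Eventually.of_forall fun ε => ?_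
    refine Filter.Eventually.of_forall fun y => ?_
    rw [Real.norm_eq_abs, ← Real.norm_eq_abs]
    have hfm : AEStronglyMeasurable
        (fun t => (if y < g (t / ε) then (1:ℝ) else 0) * ψ (t, y))
        ((volume : Measure ℝ).restrict (Ioo 0 1)) := by
      apply Measurable.aestronglyMeasurable
      exact (Measurable.ite (isOpen_lt continuous_const
          (hgc.comp (continuous_id.div_const ε))).measurableSet
          measurable_const measurable_const).mul
        (hψc.comp (continuous_id.prodMk continuous_const)).measurable
    have hb : ∀ t ∈ Ioo (0:ℝ) 1,
        ‖(if y < g (t / ε) then (1:ℝ) else 0) * ψ (t, y)‖ ≤ M := by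
      intro t _
      rw [Real.norm_eq_abs, abs_mul]
      by_cases h : y < g (t / ε) <;> simp [h, hM (t, y), abs_nonneg, hM0]
    calc ‖∫ t in Ioo (0:ℝ) 1, (if y < g (t / ε) then (1:ℝ) else 0) * ψ (t, y)‖
        ≤ M * (volume (Ioo (0:ℝ) 1)).toReal :=
          norm_setIntegral_le_of_norm_le_const measure_Ioo_lt_top hb
      _ = M := by simp [Real.volume_Ioo]
  · exact integrableOn_const measure_Ioo_lt_top.ne
  · refine Filter.Eventually.of_forall fun y => ?_
    have hcont : Continuous fun t => ψ (t, y) :=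
      hψc.comp (continuous_id.prodMk continuous_const)
    have hmeas : Measurable fun s : ℝ => if y < g s then (1:ℝ) else 0 :=
      indicator_meas g hgc y
    have hbd : ∀ s : ℝ, |if y < g s then (1:ℝ) else 0| ≤ 1 := by
      intro s; by_cases h : y < g s <;> simp [h]
    have hp : ∀ s : ℝ, (if y < g (s + L) then (1:ℝ) else 0)
        = if y < g s then (1:ℝ) else 0 := by
      intro s; rw [hper]
    have := lemB hL _ hmeas 1 hbd hp (fun t => ψ (t, y)) hcont
    have heq : (∫ t in Ioo (0:ℝ) 1, theta L g y * ψ (t, y))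
        = ((1/L) * ∫ s in (0:ℝ)..L, if y < g s then (1:ℝ) else 0)
            * ∫ t in Ioo (0:ℝ) 1, ψ (t, y) := by
      rw [integral_const_mul]
      congr 2
      rw [theta, intervalIntegral.integral_of_le hL.le, integral_Ioc_eq_integral_Ioo]
    rw [heq]
    exact this

/-- Weak-* convergence in `L^∞(Ω)` of the characteristic functions of the
oscillating domains `Ω^ε = {(x₁,x₂) : 0 < x₁ < 1, 0 < x₂ < g(x₁/ε)}`
to `θ(x₂) = (1/L) ∫_0^L χ_{Y*}(s,x₂) ds`, where `Ω = (0,1) × (0,g₁)`. -/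
theorem chi_oscillating_weak_star (L g₀ g₁ : ℝ) (hL : 0 < L) (g : ℝ → ℝ)
    (hgc : Continuous g) (hper : ∀ x, g (x + L) = g x)
    (hg₀ : 0 < g₀) (hlb : ∀ x, g₀ ≤ g x) (hub : ∀ x, g x ≤ g₁)
    (φ : ℝ × ℝ → ℝ)
    (hφ : IntegrableOn φ (Set.Ioo (0:ℝ) 1 ×ˢ Set.Ioo (0:ℝ) g₁)) :
    Tendsto
      (fun ε : ℝ => ∫ x in Set.Ioo (0:ℝ) 1 ×ˢ Set.Ioo (0:ℝ) g₁,
        (if x.2 < g (x.1 / ε) then (1:ℝ) else 0) * φ x)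
      (nhdsWithin 0 (Set.Ioi 0))
      (nhds (∫ x in Set.Ioo (0:ℝ) 1 ×ˢ Set.Ioo (0:ℝ) g₁,
        ((1 / L) * ∫ s in Set.Ioo (0:ℝ) L, if x.2 < g s then (1:ℝ) else 0) * φ x)) := by
  set Ω : Set (ℝ × ℝ) := Set.Ioo (0:ℝ) 1 ×ˢ Set.Ioo (0:ℝ) g₁ with hΩdef
  have hΩm : MeasurableSet Ω := measurableSet_Ioo.prod measurableSet_Ioo
  -- rephrase the target via theta
  show Tendsto (fun ε : ℝ => ∫ x in Ω, (if x.2 < g (x.1 / ε) then (1:ℝ) else 0) * φ x)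
    (𝓝[>] (0:ℝ)) (𝓝 (∫ x in Ω, theta L g x.2 * φ x))
  -- integrability helpers
  have hθbd : ∃ C, ∀ x : ℝ × ℝ, ‖theta L g x.2‖ ≤ C :=
    ⟨1, fun x => by rw [Real.norm_eq_abs]; exact theta_abs_le g hL hgc x.2⟩
  have hχbd : ∀ ε : ℝ, ∃ C, ∀ x : ℝ × ℝ,
      ‖(if x.2 < g (x.1 / ε) then (1:ℝ) else 0)‖ ≤ C := by
    intro ε
    refine ⟨1, fun x => ?_⟩
    rw [Real.norm_eq_abs]
    by_cases h : x.2 < g (x.1 / ε) <;> simp [h]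
  have hIθ : ∀ ρ : ℝ × ℝ → ℝ, IntegrableOn ρ Ω →
      IntegrableOn (fun x => theta L g x.2 * ρ x) Ω := fun ρ hρ =>
    hρ.bdd_mul ((theta_meas g hL hgc).comp measurable_snd).aestronglyMeasurable.restrict (ae_of_all _ hθbd.choose_spec)
  have hIχ : ∀ (ε : ℝ) (ρ : ℝ × ℝ → ℝ), IntegrableOn ρ Ω →
      IntegrableOn (fun x => (if x.2 < g (x.1 / ε) then (1:ℝ) else 0) * ρ x) Ω :=
    fun ε ρ hρ => hρ.bdd_mul (chi_meas g hgc ε).aestronglyMeasurable.restrict (ae_of_all _ (hχbd ε).choose_spec)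
  -- density argument
  apply tendsto_of_approx
  intro δ hδ
  have hF : Integrable (Ω.indicator φ) volume := hφ.integrable_indicator hΩm
  obtain ⟨ψ, hψsupp, hψdist, hψcont, hψint⟩ :=
    hF.exists_hasCompactSupport_integral_sub_le hδ
  obtain ⟨M, hM⟩ := hψsupp.exists_bound_of_continuous hψcont
  have hM' : ∀ x, |ψ x| ≤ M := fun x => by
    have := hM x; rwa [Real.norm_eq_abs] at this
  have hψΩ : IntegrableOn ψ Ω := hψint.integrableOn
  have hsub : IntegrableOn (fun x => |ψ x - φ x|) Ω := (hψΩ.sub hφ).abs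
  have hdist : (∫ x in Ω, |ψ x - φ x|) ≤ δ := by
    have h1 : EqOn (fun x => |ψ x - φ x|) (fun x => ‖Ω.indicator φ x - ψ x‖) Ω := by
      intro x hx
      simp only [Set.indicator_of_mem hx, Real.norm_eq_abs, abs_sub_comm (φ x) (ψ x)]
    calc (∫ x in Ω, |ψ x - φ x|) = ∫ x in Ω, ‖Ω.indicator φ x - ψ x‖ :=
          setIntegral_congr_fun hΩm h1
      _ ≤ ∫ x, ‖Ω.indicator φ x - ψ x‖ :=
          setIntegral_le_integral (hF.sub hψint).norm
            (Filter.Eventually.of_forall fun x => norm_nonneg _)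
      _ ≤ δ := hψdist
  refine ⟨fun ε => ∫ x in Ω, (if x.2 < g (x.1 / ε) then (1:ℝ) else 0) * ψ x,
    ∫ x in Ω, theta L g x.2 * ψ x,
    lemC hL g hgc hper ψ hψcont M hM', ?_, ?_⟩
  · -- |b - a| ≤ δ
    have hbma : (∫ x in Ω, theta L g x.2 * ψ x) - ∫ x in Ω, theta L g x.2 * φ x
        = ∫ x in Ω, theta L g x.2 * (ψ x - φ x) := by
      rw [← integral_sub (hIθ ψ hψΩ) (hIθ φ hφ)]
      congr 1; ext x; ring
    rw [hbma]
    calc |∫ x in Ω, theta L g x.2 * (ψ x - φ x)|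
        ≤ ∫ x in Ω, |theta L g x.2 * (ψ x - φ x)| := by
          simpa only [Real.norm_eq_abs] using
            norm_integral_le_integral_norm (μ := volume.restrict Ω)
              (f := fun x => theta L g x.2 * (ψ x - φ x))
      _ ≤ ∫ x in Ω, |ψ x - φ x| := by
          apply integral_mono (hIθ _ (hψΩ.sub hφ)).abs hsub
          intro x
          simp only [Pi.sub_apply, abs_mul]
          have h1 := theta_abs_le g hL hgc x.2
          have h2 := abs_nonneg (ψ x - φ x)
          nlinarith [abs_nonneg (theta L g x.2)]
      _ ≤ δ := hdist
  ·
    refine Filter.Eventually.of_forall fun ε => ?_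
    have hbma : (∫ x in Ω, (if x.2 < g (x.1 / ε) then (1:ℝ) else 0) * φ x)
        - ∫ x in Ω, (if x.2 < g (x.1 / ε) then (1:ℝ) else 0) * ψ x
        = ∫ x in Ω, (if x.2 < g (x.1 / ε) then (1:ℝ) else 0) * (φ x - ψ x) := by
      rw [← integral_sub (hIχ ε φ hφ) (hIχ ε ψ hψΩ)]
      congr 1; ext x; ring
    rw [hbma]
    calc |∫ x in Ω, (if x.2 < g (x.1 / ε) then (1:ℝ) else 0) * (φ x - ψ x)|
        ≤ ∫ x in Ω, |(if x.2 < g (x.1 / ε) then (1:ℝ) else 0) * (φ x - ψ x)| := by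
          simpa only [Real.norm_eq_abs] using
            norm_integral_le_integral_norm (μ := volume.restrict Ω)
              (f := fun x => (if x.2 < g (x.1 / ε) then (1:ℝ) else 0) * (φ x - ψ x))
      _ ≤ ∫ x in Ω, |ψ x - φ x| := by
          apply integral_mono (hIχ ε _ (hφ.sub hψΩ)).abs hsub
          intro x
          simp only [Pi.sub_apply, abs_mul]
          rw [abs_sub_comm (φ x) (ψ x)]
          have h2 := abs_nonneg (ψ x - φ x)
          by_cases h : x.2 < g (x.1 / ε) <;> simp [h] <;> nlinarith
      _ ≤ δ := hdist
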